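/- (Gap analysis, Case 4: R12 ≥ R21, R13 ≤ R31, R23 ≤ R32.) Suppose the nonnegative rate tuple lies in C̲'_g and additionally R12 ≥ R21, R13 ≤ R31, R23 ≤ R32. Define α32^b = (2^{2R23+1}−1)/(2h3²P), α31^b = 2^{2R23+1}(2^{2R13+1}−1)/(2h3²P), α32^u = 2^{2R13+2R23+2}(2^{2(R32−R23)}−1)/(h3²P), α31^u = 2^{2R32+2R13+2}(2^{2(R31−R13)}−1)/(h3²P), α21^b = 2^{2R32+2R31+2}(2^{2R21+1}−1)/(2h2²P), α12^u = 2^{2R21+2R32+2R31+3}(2^{2(R12−R21)}−1)/(h1²P), and α23^b = (h3²/h2²)α32^b, α13^b = (h3²/h1²)α31^b, α12^b = (h2²/h1²)α21^b. Then α31^b+α32^b+α32^u+α31^u ≤ 1, α21^b+α23^b ≤ 1, α12^b+α13^b+α12^u ≤ 1, and (2^{2(R13+R23)}−1)/(h3²P) + 2^{2(R13+R23)}(2^{2(R12+R32−R23)}−1)/(h2²P) + 2^{2(R13+R32+R12)}(2^{2(R31−R13)}−1)/(h1²P) ≤ 1. -/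

import Mathlib

noncomputable def Cg (x : ℝ) : ℝ := (1 / 2) * Real.logb 2 (1 + x)

private lemma rp (s t : ℝ) : (2:ℝ) ^ (s + t) = (2:ℝ) ^ s * (2:ℝ) ^ t :=
  Real.rpow_add (by norm_num) s t

private lemma rs (s t : ℝ) : (2:ℝ) ^ (s - t) = (2:ℝ) ^ s / (2:ℝ) ^ t :=
  Real.rpow_sub (by norm_num) s t

private lemma r2 : (2:ℝ) ^ (2:ℝ) = 4 := by
  nth_rewrite 2 [show (2:ℝ) = 1 + 1 by norm_num]
  rw [rp, Real.rpow_one]; norm_num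

private lemma r3 : (2:ℝ) ^ (3:ℝ) = 8 := by
  rw [show (3:ℝ) = 2 + 1 by norm_num, rp, r2, Real.rpow_one]; norm_num

private lemma r4 : (2:ℝ) ^ (4:ℝ) = 16 := by
  rw [show (4:ℝ) = 2 + 2 by norm_num, rp, r2]; norm_num

private lemma r7 : (2:ℝ) ^ (7:ℝ) = 128 := by
  rw [show (7:ℝ) = 4 + 3 by norm_num, rp, r4, r3]; norm_num

private lemma expb {u v : ℝ} (hv : 0 < v) (h : u ≤ Real.logb 2 v) : (2:ℝ) ^ u ≤ v :=
  calc (2:ℝ) ^ u ≤ (2:ℝ) ^ Real.logb 2 v :=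
        Real.rpow_le_rpow_of_exponent_le one_le_two h
    _ = v := Real.rpow_logb (by norm_num) (by norm_num) hv

private lemma one_le_rp {u : ℝ} (hu : 0 ≤ u) : (1:ℝ) ≤ (2:ℝ) ^ u := by
  have h := Real.rpow_le_rpow_of_exponent_le (one_le_two) hu
  rwa [Real.rpow_zero] at h

private lemma one_le_mul' {a b : ℝ} (ha : 1 ≤ a) (hb : 1 ≤ b) : 1 ≤ a * b :=
  calc (1:ℝ) = 1 * 1 := (one_mul 1).symm
    _ ≤ a * b := mul_le_mul ha hb zero_le_one (le_trans zero_le_one ha)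

private lemma abs_sq_le {a b : ℝ} (h : b ^ 2 ≤ a ^ 2) : (|a| + |b|) ^ 2 ≤ 4 * a ^ 2 := by
  nlinarith [sq_abs a, sq_abs b, abs_nonneg a, abs_nonneg b, sq_nonneg (|a| - |b|)]

set_option maxHeartbeats 2000000 in
theorem stmt_14
    (P h1 h2 h3 : ℝ) (hP : 0 < P)
    (hh12 : h2 ^ 2 ≤ h1 ^ 2) (hh23 : h3 ^ 2 ≤ h2 ^ 2) (hh3 : 0 < h3 ^ 2)
    (R12 R13 R21 R23 R31 R32 : ℝ)
    (hr12 : 0 ≤ R12) (hr13 : 0 ≤ R13) (hr21 : 0 ≤ R21)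
    (hr23 : 0 ≤ R23) (hr31 : 0 ≤ R31) (hr32 : 0 ≤ R32)
    (hG1 : R31 + R32 ≤ Cg (h3 ^ 2 * P) - 2)
    (hG2 : R13 + R23 ≤ Cg (h3 ^ 2 * P) - 2)
    (hG3 : R12 + R13 + R32 ≤ Cg (h2 ^ 2 * P + h3 ^ 2 * P) - 3)
    (hG4 : R13 + R23 + R12 ≤ Cg (h2 ^ 2 * P + h3 ^ 2 * P) - 3)
    (hG5 : R12 + R31 + R32 ≤ Cg (h1 ^ 2 * P + h2 ^ 2 * P) - 3)
    (hG6 : R13 + R23 + R21 ≤ Cg (h1 ^ 2 * P + h3 ^ 2 * P) - 3)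
    (hG7 : R21 + R31 + R23 ≤ Cg ((|h2| + |h3|) ^ 2 * P) - 7 / 2)
    (hG8 : R21 + R31 + R32 ≤ Cg ((|h2| + |h3|) ^ 2 * P) - 7 / 2)
    (hc1 : R21 ≤ R12) (hc2 : R13 ≤ R31) (hc3 : R23 ≤ R32)
    (a32b a31b a32u a31u a21b a12u a23b a13b a12b : ℝ)
    (ha32b : a32b = ((2:ℝ) ^ (2 * R23 + 1) - 1) / (2 * h3 ^ 2 * P))
    (ha31b : a31b = (2:ℝ) ^ (2 * R23 + 1) * ((2:ℝ) ^ (2 * R13 + 1) - 1) / (2 * h3 ^ 2 * P))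
    (ha32u : a32u = (2:ℝ) ^ (2 * R13 + 2 * R23 + 2) * ((2:ℝ) ^ (2 * (R32 - R23)) - 1) / (h3 ^ 2 * P))
    (ha31u : a31u = (2:ℝ) ^ (2 * R32 + 2 * R13 + 2) * ((2:ℝ) ^ (2 * (R31 - R13)) - 1) / (h3 ^ 2 * P))
    (ha21b : a21b = (2:ℝ) ^ (2 * R32 + 2 * R31 + 2) * ((2:ℝ) ^ (2 * R21 + 1) - 1) / (2 * h2 ^ 2 * P))
    (ha12u : a12u = (2:ℝ) ^ (2 * R21 + 2 * R32 + 2 * R31 + 3) * ((2:ℝ) ^ (2 * (R12 - R21)) - 1) / (h1 ^ 2 * P))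
    (ha23b : a23b = h3 ^ 2 / h2 ^ 2 * a32b)
    (ha13b : a13b = h3 ^ 2 / h1 ^ 2 * a31b)
    (ha12b : a12b = h2 ^ 2 / h1 ^ 2 * a21b) :
    a31b + a32b + a32u + a31u ≤ 1 ∧
    a21b + a23b ≤ 1 ∧
    a12b + a13b + a12u ≤ 1 ∧
    ((2:ℝ) ^ (2 * (R13 + R23)) - 1) / (h3 ^ 2 * P)
      + (2:ℝ) ^ (2 * (R13 + R23)) * ((2:ℝ) ^ (2 * (R12 + R32 - R23)) - 1) / (h2 ^ 2 * P)
      + (2:ℝ) ^ (2 * (R13 + R32 + R12)) * ((2:ℝ) ^ (2 * (R31 - R13)) - 1) / (h1 ^ 2 * P) ≤ 1 := by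
  subst ha32b ha31b ha32u ha31u ha21b ha12u ha23b ha13b ha12b
  simp only [Cg] at hG1 hG2 hG3 hG5 hG7 hG8
  have hh2 : 0 < h2 ^ 2 := lt_of_lt_of_le hh3 hh23
  have hh1 : 0 < h1 ^ 2 := lt_of_lt_of_le hh2 hh12
  have hp3 : 0 < h3 ^ 2 * P := by positivity
  have hp2 : 0 < h2 ^ 2 * P := by positivity
  have hp1 : 0 < h1 ^ 2 * P := by positivity
  have hzy : h3 ^ 2 * P ≤ h2 ^ 2 * P := mul_le_mul_of_nonneg_right hh23 hP.le
  have hyx : h2 ^ 2 * P ≤ h1 ^ 2 * P := mul_le_mul_of_nonneg_right hh12 hP.le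
  have habs2 : (|h2| + |h3|) ^ 2 ≤ 4 * h2 ^ 2 := abs_sq_le hh23
  have habs : (|h2| + |h3|) ^ 2 * P ≤ 4 * (h2 ^ 2 * P) := by
    have := mul_le_mul_of_nonneg_right habs2 hP.le
    linarith
  -- atoms
  have pa : (0:ℝ) < (2:ℝ) ^ (2 * R12) := Real.rpow_pos_of_pos (by norm_num) _
  have pb : (0:ℝ) < (2:ℝ) ^ (2 * R13) := Real.rpow_pos_of_pos (by norm_num) _
  have pc : (0:ℝ) < (2:ℝ) ^ (2 * R21) := Real.rpow_pos_of_pos (by norm_num) _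
  have pd : (0:ℝ) < (2:ℝ) ^ (2 * R23) := Real.rpow_pos_of_pos (by norm_num) _
  have oa : (1:ℝ) ≤ (2:ℝ) ^ (2 * R12) := one_le_rp (by linarith)
  have ob : (1:ℝ) ≤ (2:ℝ) ^ (2 * R13) := one_le_rp (by linarith)
  have oc : (1:ℝ) ≤ (2:ℝ) ^ (2 * R21) := one_le_rp (by linarith)
  have od : (1:ℝ) ≤ (2:ℝ) ^ (2 * R23) := one_le_rp (by linarith)
  have oe : (1:ℝ) ≤ (2:ℝ) ^ (2 * R31) := one_le_rp (by linarith)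
  have of' : (1:ℝ) ≤ (2:ℝ) ^ (2 * R32) := one_le_rp (by linarith)
  -- exponent expansions
  have e23 : (2:ℝ) ^ (2 * R23 + 1) = 2 * (2:ℝ) ^ (2 * R23) := by
    rw [rp, Real.rpow_one]; ring
  have e13 : (2:ℝ) ^ (2 * R13 + 1) = 2 * (2:ℝ) ^ (2 * R13) := by
    rw [rp, Real.rpow_one]; ring
  have e21 : (2:ℝ) ^ (2 * R21 + 1) = 2 * (2:ℝ) ^ (2 * R21) := by
    rw [rp, Real.rpow_one]; ring
  have e32u : (2:ℝ) ^ (2 * R13 + 2 * R23 + 2)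
      = 4 * ((2:ℝ) ^ (2 * R13) * (2:ℝ) ^ (2 * R23)) := by
    rw [rp, rp, r2]; ring
  have e31u : (2:ℝ) ^ (2 * R32 + 2 * R13 + 2)
      = 4 * ((2:ℝ) ^ (2 * R32) * (2:ℝ) ^ (2 * R13)) := by
    rw [rp, rp, r2]; ring
  have e21b : (2:ℝ) ^ (2 * R32 + 2 * R31 + 2)
      = 4 * ((2:ℝ) ^ (2 * R32) * (2:ℝ) ^ (2 * R31)) := by
    rw [rp, rp, r2]; ring
  have e12u : (2:ℝ) ^ (2 * R21 + 2 * R32 + 2 * R31 + 3)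
      = 8 * ((2:ℝ) ^ (2 * R21) * (2:ℝ) ^ (2 * R32) * (2:ℝ) ^ (2 * R31)) := by
    rw [rp, rp, rp, r3]; ring
  have edf : (2:ℝ) ^ (2 * (R32 - R23)) = (2:ℝ) ^ (2 * R32) / (2:ℝ) ^ (2 * R23) := by
    rw [show 2 * (R32 - R23) = 2 * R32 - 2 * R23 by ring, rs]
  have eeb : (2:ℝ) ^ (2 * (R31 - R13)) = (2:ℝ) ^ (2 * R31) / (2:ℝ) ^ (2 * R13) := by
    rw [show 2 * (R31 - R13) = 2 * R31 - 2 * R13 by ring, rs]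
  have eac : (2:ℝ) ^ (2 * (R12 - R21)) = (2:ℝ) ^ (2 * R12) / (2:ℝ) ^ (2 * R21) := by
    rw [show 2 * (R12 - R21) = 2 * R12 - 2 * R21 by ring, rs]
  have ebd : (2:ℝ) ^ (2 * (R13 + R23)) = (2:ℝ) ^ (2 * R13) * (2:ℝ) ^ (2 * R23) := by
    rw [show 2 * (R13 + R23) = 2 * R13 + 2 * R23 by ring, rp]
  have eafd : (2:ℝ) ^ (2 * (R12 + R32 - R23))
      = (2:ℝ) ^ (2 * R12) * (2:ℝ) ^ (2 * R32) / (2:ℝ) ^ (2 * R23) := by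
    rw [show 2 * (R12 + R32 - R23) = 2 * R12 + 2 * R32 - 2 * R23 by ring, rs, rp]
  have eabf : (2:ℝ) ^ (2 * (R13 + R32 + R12))
      = (2:ℝ) ^ (2 * R13) * (2:ℝ) ^ (2 * R32) * (2:ℝ) ^ (2 * R12) := by
    rw [show 2 * (R13 + R32 + R12) = 2 * R13 + 2 * R32 + 2 * R12 by ring, rp, rp]
  -- hypothesis conversions
  have H1 : (2:ℝ) ^ (2 * R31) * (2:ℝ) ^ (2 * R32) * 16 ≤ 1 + h3 ^ 2 * P := by
    have h := expb (v := 1 + h3 ^ 2 * P) (by positivity)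
      (show 2 * R31 + 2 * R32 + (4:ℝ) ≤ Real.logb 2 (1 + h3 ^ 2 * P) by linarith)
    rwa [rp, rp, r4] at h
  have H2 : (2:ℝ) ^ (2 * R13) * (2:ℝ) ^ (2 * R23) * 16 ≤ 1 + h3 ^ 2 * P := by
    have h := expb (v := 1 + h3 ^ 2 * P) (by positivity)
      (show 2 * R13 + 2 * R23 + (4:ℝ) ≤ Real.logb 2 (1 + h3 ^ 2 * P) by linarith)
    rwa [rp, rp, r4] at h
  have H3 : (2:ℝ) ^ (2 * R12) * (2:ℝ) ^ (2 * R13) * (2:ℝ) ^ (2 * R32) * 64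
      ≤ 1 + (h2 ^ 2 * P + h3 ^ 2 * P) := by
    have h := expb (v := 1 + (h2 ^ 2 * P + h3 ^ 2 * P)) (by positivity)
      (show 2 * R12 + 2 * R13 + 2 * R32 + (6:ℝ)
        ≤ Real.logb 2 (1 + (h2 ^ 2 * P + h3 ^ 2 * P)) by linarith)
    rwa [rp, rp, rp, show (2:ℝ) ^ (6:ℝ) = 64 by
      rw [show (6:ℝ) = 3 + 3 by norm_num, rp, r3]; norm_num] at h
  have H5 : (2:ℝ) ^ (2 * R12) * (2:ℝ) ^ (2 * R31) * (2:ℝ) ^ (2 * R32) * 64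
      ≤ 1 + (h1 ^ 2 * P + h2 ^ 2 * P) := by
    have h := expb (v := 1 + (h1 ^ 2 * P + h2 ^ 2 * P)) (by positivity)
      (show 2 * R12 + 2 * R31 + 2 * R32 + (6:ℝ)
        ≤ Real.logb 2 (1 + (h1 ^ 2 * P + h2 ^ 2 * P)) by linarith)
    rwa [rp, rp, rp, show (2:ℝ) ^ (6:ℝ) = 64 by
      rw [show (6:ℝ) = 3 + 3 by norm_num, rp, r3]; norm_num] at h
  have H7 : (2:ℝ) ^ (2 * R21) * (2:ℝ) ^ (2 * R31) * (2:ℝ) ^ (2 * R23) * 128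
      ≤ 1 + 4 * (h2 ^ 2 * P) := by
    have h := expb (v := 1 + (|h2| + |h3|) ^ 2 * P) (by positivity)
      (show 2 * R21 + 2 * R31 + 2 * R23 + (7:ℝ)
        ≤ Real.logb 2 (1 + (|h2| + |h3|) ^ 2 * P) by linarith)
    rw [rp, rp, rp, r7] at h
    linarith
  have H8 : (2:ℝ) ^ (2 * R21) * (2:ℝ) ^ (2 * R31) * (2:ℝ) ^ (2 * R32) * 128
      ≤ 1 + 4 * (h2 ^ 2 * P) := by
    have h := expb (v := 1 + (|h2| + |h3|) ^ 2 * P) (by positivity)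
      (show 2 * R21 + 2 * R31 + 2 * R32 + (7:ℝ)
        ≤ Real.logb 2 (1 + (|h2| + |h3|) ^ 2 * P) by linarith)
    rw [rp, rp, rp, r7] at h
    linarith
  -- product facts
  have hbd : (1:ℝ) ≤ (2:ℝ) ^ (2 * R13) * (2:ℝ) ^ (2 * R23) := one_le_mul' ob od
  have hef : (1:ℝ) ≤ (2:ℝ) ^ (2 * R31) * (2:ℝ) ^ (2 * R32) := one_le_mul' oe of'
  have hce : (1:ℝ) ≤ (2:ℝ) ^ (2 * R21) * (2:ℝ) ^ (2 * R31) := one_le_mul' oc oe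
  have hcef : (1:ℝ) ≤ (2:ℝ) ^ (2 * R21) * (2:ℝ) ^ (2 * R31) * (2:ℝ) ^ (2 * R32) :=
    one_le_mul' hce of'
  have hced : (2:ℝ) ^ (2 * R23)
      ≤ (2:ℝ) ^ (2 * R21) * (2:ℝ) ^ (2 * R31) * (2:ℝ) ^ (2 * R23) := by
    have h := mul_le_mul_of_nonneg_right hce pd.le
    rw [one_mul] at h
    exact h
  have hab : (1:ℝ) ≤ (2:ℝ) ^ (2 * R13) * (2:ℝ) ^ (2 * R32) := one_le_mul' ob of'
  have habf : (1:ℝ) ≤ (2:ℝ) ^ (2 * R13) * (2:ℝ) ^ (2 * R32) * (2:ℝ) ^ (2 * R12) :=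
    one_le_mul' hab oa
  have h3ne : h3 ^ 2 ≠ 0 := ne_of_gt hh3
  have h2ne : h2 ^ 2 ≠ 0 := ne_of_gt hh2
  have h1ne : h1 ^ 2 ≠ 0 := ne_of_gt hh1
  have hPne : P ≠ 0 := ne_of_gt hP
  refine ⟨?_, ?_, ?_, ?_⟩
  · -- conjunct 1
    have key : (2:ℝ) ^ (2 * R23 + 1) * ((2:ℝ) ^ (2 * R13 + 1) - 1) / (2 * h3 ^ 2 * P)
        + ((2:ℝ) ^ (2 * R23 + 1) - 1) / (2 * h3 ^ 2 * P)
        + (2:ℝ) ^ (2 * R13 + 2 * R23 + 2) * ((2:ℝ) ^ (2 * (R32 - R23)) - 1) / (h3 ^ 2 * P)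
        + (2:ℝ) ^ (2 * R32 + 2 * R13 + 2) * ((2:ℝ) ^ (2 * (R31 - R13)) - 1) / (h3 ^ 2 * P)
        = (4 * ((2:ℝ) ^ (2 * R31) * (2:ℝ) ^ (2 * R32))
            - 2 * ((2:ℝ) ^ (2 * R13) * (2:ℝ) ^ (2 * R23)) - 1 / 2) / (h3 ^ 2 * P) := by
      rw [e23, e13, e32u, edf, e31u, eeb]
      field_simp
      ring
    rw [key, div_le_one hp3]
    linarith only [H1, hbd, hp3]
  · -- conjunct 2
    have key : (2:ℝ) ^ (2 * R32 + 2 * R31 + 2) * ((2:ℝ) ^ (2 * R21 + 1) - 1) / (2 * h2 ^ 2 * P)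
        + h3 ^ 2 / h2 ^ 2 * (((2:ℝ) ^ (2 * R23 + 1) - 1) / (2 * h3 ^ 2 * P))
        = (4 * ((2:ℝ) ^ (2 * R21) * (2:ℝ) ^ (2 * R31) * (2:ℝ) ^ (2 * R32))
            - 2 * ((2:ℝ) ^ (2 * R31) * (2:ℝ) ^ (2 * R32))
            + (2:ℝ) ^ (2 * R23) - 1 / 2) / (h2 ^ 2 * P) := by
      rw [e21b, e21, e23]
      obtain ⟨hn1, hn2, hn3⟩ : h1 ≠ 0 ∧ h2 ≠ 0 ∧ h3 ≠ 0 :=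
        ⟨fun h => h1ne (by rw [h]; norm_num), fun h => h2ne (by rw [h]; norm_num),
          fun h => h3ne (by rw [h]; norm_num)⟩
      field_simp
      ring
    rw [key, div_le_one hp2]
    linarith only [H7, H8, hced, hef, hp2]
  · -- conjunct 3
    have key : h2 ^ 2 / h1 ^ 2
          * ((2:ℝ) ^ (2 * R32 + 2 * R31 + 2) * ((2:ℝ) ^ (2 * R21 + 1) - 1) / (2 * h2 ^ 2 * P))
        + h3 ^ 2 / h1 ^ 2
          * ((2:ℝ) ^ (2 * R23 + 1) * ((2:ℝ) ^ (2 * R13 + 1) - 1) / (2 * h3 ^ 2 * P))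
        + (2:ℝ) ^ (2 * R21 + 2 * R32 + 2 * R31 + 3) * ((2:ℝ) ^ (2 * (R12 - R21)) - 1)
            / (h1 ^ 2 * P)
        = (8 * ((2:ℝ) ^ (2 * R12) * (2:ℝ) ^ (2 * R31) * (2:ℝ) ^ (2 * R32))
            - 4 * ((2:ℝ) ^ (2 * R21) * (2:ℝ) ^ (2 * R31) * (2:ℝ) ^ (2 * R32))
            - 2 * ((2:ℝ) ^ (2 * R31) * (2:ℝ) ^ (2 * R32))
            + 2 * ((2:ℝ) ^ (2 * R13) * (2:ℝ) ^ (2 * R23))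
            - (2:ℝ) ^ (2 * R23)) / (h1 ^ 2 * P) := by
      rw [e21b, e21, e23, e13, e12u, eac]
      obtain ⟨hn1, hn2, hn3⟩ : h1 ≠ 0 ∧ h2 ≠ 0 ∧ h3 ≠ 0 :=
        ⟨fun h => h1ne (by rw [h]; norm_num), fun h => h2ne (by rw [h]; norm_num),
          fun h => h3ne (by rw [h]; norm_num)⟩
      field_simp
      ring
    rw [key, div_le_one hp1]
    linarith only [H5, hcef, hef, H2, od, hzy, hyx, hp1]
  · -- conjunct 4
    have key : ((2:ℝ) ^ (2 * (R13 + R23)) - 1) / (h3 ^ 2 * P)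
        + (2:ℝ) ^ (2 * (R13 + R23)) * ((2:ℝ) ^ (2 * (R12 + R32 - R23)) - 1) / (h2 ^ 2 * P)
        + (2:ℝ) ^ (2 * (R13 + R32 + R12)) * ((2:ℝ) ^ (2 * (R31 - R13)) - 1) / (h1 ^ 2 * P)
        = ((2:ℝ) ^ (2 * R13) * (2:ℝ) ^ (2 * R23) - 1) / (h3 ^ 2 * P)
        + ((2:ℝ) ^ (2 * R13) * (2:ℝ) ^ (2 * R32) * (2:ℝ) ^ (2 * R12)
            - (2:ℝ) ^ (2 * R13) * (2:ℝ) ^ (2 * R23)) / (h2 ^ 2 * P)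
        + ((2:ℝ) ^ (2 * R12) * (2:ℝ) ^ (2 * R31) * (2:ℝ) ^ (2 * R32)
            - (2:ℝ) ^ (2 * R13) * (2:ℝ) ^ (2 * R32) * (2:ℝ) ^ (2 * R12)) / (h1 ^ 2 * P) := by
      rw [ebd, eafd, eabf, eeb]
      field_simp
    rw [key]
    have t1 : ((2:ℝ) ^ (2 * R13) * (2:ℝ) ^ (2 * R23) - 1) / (h3 ^ 2 * P) ≤ 1 / 16 := by
      rw [div_le_iff₀ hp3]; linarith only [H2]
    have t2 : ((2:ℝ) ^ (2 * R13) * (2:ℝ) ^ (2 * R32) * (2:ℝ) ^ (2 * R12)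
        - (2:ℝ) ^ (2 * R13) * (2:ℝ) ^ (2 * R23)) / (h2 ^ 2 * P) ≤ 1 / 32 := by
      rw [div_le_iff₀ hp2]; linarith only [H3, hbd, hzy]
    have t3 : ((2:ℝ) ^ (2 * R12) * (2:ℝ) ^ (2 * R31) * (2:ℝ) ^ (2 * R32)
        - (2:ℝ) ^ (2 * R13) * (2:ℝ) ^ (2 * R32) * (2:ℝ) ^ (2 * R12)) / (h1 ^ 2 * P)
        ≤ 1 / 32 := by
      rw [div_le_iff₀ hp1]; linarith only [H5, habf, hyx]
    linarith only [t1, t2, t3]
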